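/- Let l ≥ 2 and i ≥ 1 be integers, n₂ = Θ(n₁), n = √(n₁n₂), and suppose p ≪ n^{−(4i−1)/(4i+1)} and l ≤ 2i. In the random orientation digraph D of G ∈ G_{n₁,n₂,p}, the expected number of ordered pairs of vertices (u,v) joined by 8i+2 internally disjoint directed paths of length l is o(1); hence asymptotically almost surely no such pair exists. -/

import Mathlib

open MeasureTheory Filter
open scoped ENNReal

instance : MeasurableSpace (Option Bool) := ⊤

/-- The measure on `Option Bool` describing one potential edge of the random
orientation digraph: with probability `1−p` the edge is absent (`none`), with
probability `p/2` it is oriented from `X` to `Y` (`some true`), and with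
probability `p/2` from `Y` to `X` (`some false`). -/
noncomputable def orientBern (p : ℝ) : Measure (Option Bool) :=
  (ENNReal.ofReal (1 - p)) • Measure.dirac none
    + (ENNReal.ofReal (p / 2)) • Measure.dirac (some true)
    + (ENNReal.ofReal (p / 2)) • Measure.dirac (some false)

/-- The random orientation digraph `D` of `G ∈ G_{n₁,n₂,p}`: each edge of the
random bipartite graph is present with probability `p` and oriented uniformly
at random, independently. -/
noncomputable def orientMeasure (n₁ n₂ : ℕ) (p : ℝ) :
    Measure (Fin n₁ × Fin n₂ → Option Bool) :=
  Measure.pi fun _ => orientBern p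

/-- The arc relation of the sampled digraph on `Fin n₁ ⊕ Fin n₂`. -/
def arc {n₁ n₂ : ℕ} (ω : Fin n₁ × Fin n₂ → Option Bool) :
    Fin n₁ ⊕ Fin n₂ → Fin n₁ ⊕ Fin n₂ → Prop
  | .inl x, .inr y => ω (x, y) = some true
  | .inr y, .inl x => ω (x, y) = some false
  | _, _ => False

/-- `P` is a family of `g` internally disjoint directed paths of length `l`
from `u` to `v` in the digraph `D`. -/
def InternallyDisjointPaths {V : Type} (D : V → V → Prop) (g l : ℕ)
    (u v : V) (P : Fin g → Fin (l + 1) → V) : Prop :=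
  (∀ s, P s 0 = u ∧ P s (Fin.last l) = v ∧
      (∀ t : Fin l, D (P s t.castSucc) (P s t.succ)) ∧
      Function.Injective (P s)) ∧
    ∀ s s', s ≠ s' → ∀ t t' : Fin (l + 1),
      t ≠ 0 → t ≠ Fin.last l → t' ≠ 0 → t' ≠ Fin.last l → P s t ≠ P s' t'

/-- The number of ordered pairs of vertices joined by `8i+2` internally
disjoint directed paths of length `l` in the sampled digraph. -/
noncomputable def badPairCount {n₁ n₂ : ℕ} (i l : ℕ)
    (ω : Fin n₁ × Fin n₂ → Option Bool) : ℕ :=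
  Nat.card {uv : (Fin n₁ ⊕ Fin n₂) × (Fin n₁ ⊕ Fin n₂) //
    ∃ P : Fin (8 * i + 2) → Fin (l + 1) → Fin n₁ ⊕ Fin n₂,
      InternallyDisjointPaths (arc ω) (8 * i + 2) l uv.1 uv.2 P}

instance : MeasurableSingletonClass (Option Bool) := ⟨fun _ => trivial⟩

lemma orientBern_apply (p : ℝ) (s : Set (Option Bool)) :
    orientBern p s = (ENNReal.ofReal (1 - p)) * s.indicator 1 none
      + (ENNReal.ofReal (p / 2)) * s.indicator 1 (some true)
      + (ENNReal.ofReal (p / 2)) * s.indicator 1 (some false) := by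
  simp [orientBern, Measure.dirac_apply']

lemma orientBern_univ (p : ℝ) (hp0 : 0 ≤ p) (hp1 : p ≤ 1) :
    orientBern p Set.univ = 1 := by
  rw [orientBern_apply]
  simp only [Set.indicator_univ, Pi.one_apply, mul_one]
  rw [← ENNReal.ofReal_add (by linarith) (by linarith),
      ← ENNReal.ofReal_add (by linarith) (by linarith)]
  rw [show (1:ℝ) - p + p/2 + p/2 = 1 by ring]; exact ENNReal.ofReal_one

lemma orientBern_some_le (p : ℝ) (hp0 : 0 ≤ p) (b : Bool) :
    orientBern p {some b} ≤ ENNReal.ofReal p := by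
  rw [orientBern_apply]
  cases b <;> simp [Set.indicator_apply] <;>
    exact ENNReal.ofReal_le_ofReal (by linarith)

instance orientBern_finite (p : ℝ) : IsFiniteMeasure (orientBern p) := by
  constructor
  rw [orientBern_apply]
  simp only [Set.indicator_univ, Pi.one_apply, mul_one]
  exact ENNReal.add_lt_top.2 ⟨ENNReal.add_lt_top.2 ⟨ENNReal.ofReal_lt_top, ENNReal.ofReal_lt_top⟩,
    ENNReal.ofReal_lt_top⟩

lemma arc_spec {n₁ n₂ : ℕ} {ω : Fin n₁ × Fin n₂ → Option Bool}
    {a b : Fin n₁ ⊕ Fin n₂} (h : arc ω a b) :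
    ∃ q : (Fin n₁ × Fin n₂) × Bool,
      ((a = .inl q.1.1 ∧ b = .inr q.1.2) ∨ (a = .inr q.1.2 ∧ b = .inl q.1.1)) ∧
        ∀ ω' : Fin n₁ × Fin n₂ → Option Bool, arc ω' a b → ω' q.1 = some q.2 := by
  match a, b with
  | .inl x, .inr y => exact ⟨((x, y), true), Or.inl ⟨rfl, rfl⟩, fun ω' h' => h'⟩
  | .inr y, .inl x => exact ⟨((x, y), false), Or.inr ⟨rfl, rfl⟩, fun ω' h' => h'⟩
  | .inl x, .inl x' => exact absurd h (by simp [arc])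
  | .inr y, .inr y' => exact absurd h (by simp [arc])

lemma measure_paths_le (n₁ n₂ g l : ℕ) (hl : 2 ≤ l) (p : ℝ) (hp0 : 0 ≤ p) (hp1 : p ≤ 1)
    (u v : Fin n₁ ⊕ Fin n₂) (P : Fin g → Fin (l + 1) → Fin n₁ ⊕ Fin n₂) :
    orientMeasure n₁ n₂ p {ω | InternallyDisjointPaths (arc ω) g l u v P}
      ≤ (ENNReal.ofReal p) ^ (g * l) := by
  set E := {ω : Fin n₁ × Fin n₂ → Option Bool | InternallyDisjointPaths (arc ω) g l u v P}
  rcases Set.eq_empty_or_nonempty E with hE | ⟨ω₀, hω₀⟩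
  · rw [hE]; simp
  have h0 : ∀ s, P s 0 = u := fun s => (hω₀.1 s).1
  have hlast : ∀ s, P s (Fin.last l) = v := fun s => (hω₀.1 s).2.1
  have hinj : ∀ s, Function.Injective (P s) := fun s => (hω₀.1 s).2.2.2
  have hdisj := hω₀.2
  have harc : ∀ s (t : Fin l), arc ω₀ (P s t.castSucc) (P s t.succ) :=
    fun s t => (hω₀.1 s).2.2.1 t
  -- the edge/orientation used by the t-th arc of the s-th path
  have hq0 := fun (s : Fin g) (t : Fin l) => arc_spec (harc s t)
  set q : Fin g → Fin l → (Fin n₁ × Fin n₂) × Bool :=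
    fun s t => Classical.choose (hq0 s t) with hqdef
  have hq : ∀ s t,
      ((P s t.castSucc = .inl (q s t).1.1 ∧ P s t.succ = .inr (q s t).1.2) ∨
        (P s t.castSucc = .inr (q s t).1.2 ∧ P s t.succ = .inl (q s t).1.1)) ∧
        ∀ ω', arc ω' (P s t.castSucc) (P s t.succ) → ω' (q s t).1 = some (q s t).2 :=
    fun s t => Classical.choose_spec (hq0 s t)
  -- internal-vertex helper
  have hinternal : ∀ (s s' : Fin g), s ≠ s' → ∀ (a a' : Fin (l + 1)),
      a ≠ 0 → a ≠ Fin.last l → P s a = P s' a' → False := by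
    intro s s' hss' a a' ha0 hal heq
    by_cases h0' : a' = 0
    · subst h0'
      rw [h0 s', ← h0 s] at heq
      exact ha0 (hinj s heq)
    by_cases hl' : a' = Fin.last l
    · subst hl'
      rw [hlast s', ← hlast s] at heq
      exact hal (hinj s heq)
    · exact hdisj s s' hss' a a' ha0 hal h0' hl' heq
  -- injectivity of the edge map
  have inj : Function.Injective (fun st : Fin g × Fin l => (q st.1 st.2).1) := by
    rintro ⟨s, t⟩ ⟨s', t'⟩ hedge
    simp only at hedge
    -- turn edge equality into vertex relations
    have hAB : (P s t.castSucc = P s' t'.castSucc ∧ P s t.succ = P s' t'.succ) ∨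
        (P s t.castSucc = P s' t'.succ ∧ P s t.succ = P s' t'.castSucc) := by
      rcases (hq s t).1 with ⟨h1, h2⟩ | ⟨h1, h2⟩ <;>
        rcases (hq s' t').1 with ⟨h1', h2'⟩ | ⟨h1', h2'⟩
      · exact Or.inl ⟨by rw [h1, h1', hedge], by rw [h2, h2', hedge]⟩
      · exact Or.inr ⟨by rw [h1, h2', hedge], by rw [h2, h1', hedge]⟩
      · exact Or.inr ⟨by rw [h1, h2', hedge], by rw [h2, h1', hedge]⟩
      · exact Or.inl ⟨by rw [h1, h1', hedge], by rw [h2, h2', hedge]⟩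
    by_cases hss' : s = s'
    · subst hss'
      rcases hAB with ⟨h1, h2⟩ | ⟨h1, h2⟩
      · have := hinj s h1
        have ht : t = t' := by
          have := congrArg Fin.val this
          simp only [Fin.coe_castSucc] at this
          exact Fin.ext this
        rw [ht]
      · exfalso
        have e1 := congrArg Fin.val (hinj s h1)
        have e2 := congrArg Fin.val (hinj s h2)
        simp only [Fin.coe_castSucc, Fin.val_succ] at e1 e2
        omega
    · exfalso
      -- pick an internal endpoint of arc (s, t)
      by_cases ht0 : (t : ℕ) = 0
      · -- use P s t.succ, which has value 1
        have hint0 : t.succ ≠ (0 : Fin (l+1)) := by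
          intro h; have := congrArg Fin.val h; simp [ht0] at this
        have hintl : t.succ ≠ Fin.last l := by
          intro h; have := congrArg Fin.val h; simp [Fin.val_succ, ht0, Fin.val_last] at this
          omega
        rcases hAB with ⟨h1, h2⟩ | ⟨h1, h2⟩
        · exact hinternal s s' hss' t.succ t'.succ hint0 hintl h2
        · exact hinternal s s' hss' t.succ t'.castSucc hint0 hintl h2
      · -- use P s t.castSucc, which has value t ∈ [1, l-1]
        have hint0 : t.castSucc ≠ (0 : Fin (l+1)) := by
          intro h; have := congrArg Fin.val h; simp [Fin.coe_castSucc] at this; exact ht0 this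
        have hintl : t.castSucc ≠ Fin.last l := by
          intro h; have := congrArg Fin.val h
          simp only [Fin.coe_castSucc, Fin.val_last] at this
          have := t.isLt; omega
        rcases hAB with ⟨h1, h2⟩ | ⟨h1, h2⟩
        · exact hinternal s s' hss' t.castSucc t'.castSucc hint0 hintl h1
        · exact hinternal s s' hss' t.castSucc t'.succ hint0 hintl h1
  -- the cylinder set
  set S : Fin n₁ × Fin n₂ → Set (Option Bool) :=
    fun ε => {o | ∀ s t, (q s t).1 = ε → o = some (q s t).2} with hSdef
  have hsub : E ⊆ Set.univ.pi S := by
    intro ω hω ε _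
    intro s t hst
    rw [← hst]
    exact (hq s t).2 ω ((hω.1 s).2.2.1 t)
  calc orientMeasure n₁ n₂ p E ≤ orientMeasure n₁ n₂ p (Set.univ.pi S) := measure_mono hsub
    _ = ∏ ε : Fin n₁ × Fin n₂, orientBern p (S ε) := Measure.pi_pi _ _
    _ ≤ ∏ ε : Fin n₁ × Fin n₂,
        (if ε ∈ Finset.image (fun st : Fin g × Fin l => (q st.1 st.2).1) Finset.univ
          then ENNReal.ofReal p else 1) := by
        apply Finset.prod_le_prod'
        intro ε _
        by_cases hmem : ε ∈ Finset.image (fun st : Fin g × Fin l => (q st.1 st.2).1) Finset.univ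
        · rw [if_pos hmem]
          obtain ⟨⟨s, t⟩, -, hst⟩ := Finset.mem_image.1 hmem
          refine le_trans (measure_mono ?_) (orientBern_some_le p hp0 (q s t).2)
          intro o ho
          exact ho s t hst
        · rw [if_neg hmem]
          calc orientBern p (S ε) ≤ orientBern p Set.univ := measure_mono (Set.subset_univ _)
            _ = 1 := orientBern_univ p hp0 hp1
    _ = (ENNReal.ofReal p) ^ (g * l) := by
        rw [Finset.prod_ite_mem, Finset.univ_inter, Finset.prod_const,
          Finset.card_image_of_injective _ inj]
        simp [Fintype.card_prod]

/-- Reconstruct a path family from its internal vertices. -/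
def buildP {n₁ n₂ : ℕ} (g l : ℕ) (u v : Fin n₁ ⊕ Fin n₂)
    (Q : Fin g → Fin (l - 1) → Fin n₁ ⊕ Fin n₂) (s : Fin g) (j : Fin (l + 1)) :
    Fin n₁ ⊕ Fin n₂ :=
  if h : (j : ℕ) = 0 then u
  else if h' : (j : ℕ) = l then v
  else Q s ⟨(j : ℕ) - 1, by have := j.isLt; omega⟩

lemma badPairCount_le_card {n₁ n₂ : ℕ} (i l : ℕ)
    (ω : Fin n₁ × Fin n₂ → Option Bool) :
    badPairCount i l ω ≤ Nat.card {tq : ((Fin n₁ ⊕ Fin n₂) × (Fin n₁ ⊕ Fin n₂)) ×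
        (Fin (8 * i + 2) → Fin (l - 1) → Fin n₁ ⊕ Fin n₂) //
      InternallyDisjointPaths (arc ω) (8 * i + 2) l tq.1.1 tq.1.2
        (buildP (8 * i + 2) l tq.1.1 tq.1.2 tq.2)} := by
  classical
  have key : ∀ (uv : (Fin n₁ ⊕ Fin n₂) × (Fin n₁ ⊕ Fin n₂))
      (hP : ∃ P : Fin (8 * i + 2) → Fin (l + 1) → Fin n₁ ⊕ Fin n₂,
        InternallyDisjointPaths (arc ω) (8 * i + 2) l uv.1 uv.2 P),
      InternallyDisjointPaths (arc ω) (8 * i + 2) l uv.1 uv.2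
        (buildP (8 * i + 2) l uv.1 uv.2
          (fun s t => Classical.choose hP s ⟨(t : ℕ) + 1, by have := t.isLt; omega⟩)) := by
    intro uv hP
    have hspec := Classical.choose_spec hP
    set P := Classical.choose hP with hPdef
    have hbuild : buildP (8 * i + 2) l uv.1 uv.2
        (fun s t => P s ⟨(t : ℕ) + 1, by have := t.isLt; omega⟩) = P := by
      funext s j
      unfold buildP
      by_cases h0 : (j : ℕ) = 0
      · rw [dif_pos h0]
        have : j = 0 := Fin.ext (by simpa using h0)
        rw [this]; exact ((hspec.1 s).1).symm
      by_cases hl' : (j : ℕ) = l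
      · rw [dif_neg h0, dif_pos hl']
        have : j = Fin.last l := Fin.ext (by simpa using hl')
        rw [this]; exact ((hspec.1 s).2.1).symm
      · rw [dif_neg h0, dif_neg hl']
        show P s ⟨((j : ℕ) - 1) + 1, by have := j.isLt; omega⟩ = P s j
        congr 1
        exact Fin.ext (by simp only [Fin.val_mk]; omega)
    rw [hbuild]
    exact hspec
  exact Nat.card_le_card_of_injective
    (fun x => ⟨⟨x.1, fun s t => Classical.choose x.2 s
        ⟨(t : ℕ) + 1, by have := t.isLt; omega⟩⟩, key x.1 x.2⟩)
    (fun x y hxy => Subtype.ext (congrArg (fun z => z.1.1) hxy))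

lemma lintegral_badPairCount_le (n₁ n₂ i l : ℕ) (hl : 2 ≤ l) (p : ℝ)
    (hp0 : 0 ≤ p) (hp1 : p ≤ 1) :
    ∫⁻ ω, (badPairCount i l ω : ℝ≥0∞) ∂(orientMeasure n₁ n₂ p)
      ≤ (((n₁ + n₂ : ℕ) : ℝ≥0∞)) ^ (2 + (8 * i + 2) * (l - 1))
          * (ENNReal.ofReal p) ^ ((8 * i + 2) * l) := by
  classical
  have hpt : ∀ ω : Fin n₁ × Fin n₂ → Option Bool, (badPairCount i l ω : ℝ≥0∞) ≤
      ∑ tq : ((Fin n₁ ⊕ Fin n₂) × (Fin n₁ ⊕ Fin n₂)) ×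
          (Fin (8 * i + 2) → Fin (l - 1) → Fin n₁ ⊕ Fin n₂),
        ({ω' | InternallyDisjointPaths (arc ω') (8 * i + 2) l tq.1.1 tq.1.2
            (buildP (8 * i + 2) l tq.1.1 tq.1.2 tq.2)}.indicator
          (fun _ => (1 : ℝ≥0∞)) ω) := by
    intro ω
    have h1 := badPairCount_le_card i l ω
    rw [Nat.card_eq_fintype_card, Fintype.card_subtype, Finset.card_filter] at h1
    calc (badPairCount i l ω : ℝ≥0∞)
        ≤ ((∑ tq : ((Fin n₁ ⊕ Fin n₂) × (Fin n₁ ⊕ Fin n₂)) ×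
            (Fin (8 * i + 2) → Fin (l - 1) → Fin n₁ ⊕ Fin n₂),
          if InternallyDisjointPaths (arc ω) (8 * i + 2) l tq.1.1 tq.1.2
              (buildP (8 * i + 2) l tq.1.1 tq.1.2 tq.2) then 1 else 0 : ℕ) : ℝ≥0∞) := by
          exact_mod_cast Nat.cast_le.2 h1
      _ = _ := by
          push_cast
          apply Finset.sum_congr rfl
          intro tq _
          rw [Set.indicator_apply]
          simp [Set.mem_setOf_eq]
  refine le_trans (lintegral_mono hpt) ?_
  rw [lintegral_finset_sum _
    (fun tq _ => (measurable_const.indicator MeasurableSet.of_discrete))]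
  have hterm : ∀ tq : ((Fin n₁ ⊕ Fin n₂) × (Fin n₁ ⊕ Fin n₂)) ×
      (Fin (8 * i + 2) → Fin (l - 1) → Fin n₁ ⊕ Fin n₂),
      ∫⁻ ω, ({ω' | InternallyDisjointPaths (arc ω') (8 * i + 2) l tq.1.1 tq.1.2
          (buildP (8 * i + 2) l tq.1.1 tq.1.2 tq.2)}.indicator
        (fun _ => (1 : ℝ≥0∞)) ω) ∂(orientMeasure n₁ n₂ p)
        ≤ (ENNReal.ofReal p) ^ ((8 * i + 2) * l) := by
    intro tq
    rw [lintegral_indicator MeasurableSet.of_discrete, setLIntegral_one]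
    exact measure_paths_le n₁ n₂ (8 * i + 2) l hl p hp0 hp1 _ _ _
  refine le_trans (Finset.sum_le_sum (fun tq _ => hterm tq)) ?_
  rw [Finset.sum_const, Finset.card_univ, nsmul_eq_mul]
  apply mul_le_mul_left
  have hcard : Fintype.card (((Fin n₁ ⊕ Fin n₂) × (Fin n₁ ⊕ Fin n₂)) ×
      (Fin (8 * i + 2) → Fin (l - 1) → Fin n₁ ⊕ Fin n₂))
      = (n₁ + n₂) ^ (2 + (8 * i + 2) * (l - 1)) := by
    simp [Fintype.card_prod, Fintype.card_fun, Fintype.card_sum, Fintype.card_fin, ← pow_mul,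
      ← pow_add]
    ring
  rw [hcard]
  push_cast
  exact le_rfl


/-- Let `l ≥ 2`, `i ≥ 1`, `n₂ = Θ(n₁)`, `n = √(n₁n₂)`, `l ≤ 2i` and
`p ≪ n^{−(4i−1)/(4i+1)}`.  In the random orientation digraph of
`G ∈ G_{n₁,n₂,p}`, the expected number of ordered pairs of vertices joined by
`8i+2` internally disjoint directed paths of length `l` is `o(1)`; hence a.a.s.
no such pair exists. -/
theorem no_many_disjoint_paths (i l : ℕ) (hi : 1 ≤ i) (hl2 : 2 ≤ l)
    (hl : l ≤ 2 * i)
    (n₁ n₂ : ℕ → ℕ) (p : ℕ → ℝ) (hp : ∀ k, 0 ≤ p k ∧ p k ≤ 1)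
    (hΘ : ∃ c : ℝ, 0 < c ∧ ∀ k, (n₁ k : ℝ) ≤ c * n₂ k ∧ (n₂ k : ℝ) ≤ c * n₁ k)
    (hn₁ : Tendsto n₁ atTop atTop)
    (hpsmall : Tendsto
      (fun k => p k * Real.sqrt ((n₁ k : ℝ) * n₂ k)
          ^ ((4 * (i : ℝ) - 1) / (4 * i + 1)))
      atTop (nhds 0)) :
    Tendsto
      (fun k => ∫ ω, (badPairCount i l ω : ℝ) ∂(orientMeasure (n₁ k) (n₂ k) (p k)))
      atTop (nhds 0) ∧
    Tendsto
      (fun k => orientMeasure (n₁ k) (n₂ k) (p k) {ω | 1 ≤ badPairCount i l ω})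
      atTop (nhds 0) := by
  classical
  set m := (8 * i + 2) * l with hm
  set A := 2 + (8 * i + 2) * (l - 1) with hA
  set B := 2 * l * (4 * i - 1) with hB
  have hm0 : m ≠ 0 := by rw [hm]; positivity
  have hAB : A ≤ B := by
    rw [hA, hB]
    obtain ⟨j, rfl⟩ : ∃ j, i = j + 1 := ⟨i - 1, by omega⟩
    obtain ⟨d, rfl⟩ : ∃ d, l = d + 2 := ⟨l - 2, by omega⟩
    have hd : d ≤ 2 * j := by omega
    have h1 : d + 2 - 1 = d + 1 := by omega
    have h2 : 4 * (j + 1) - 1 = 4 * j + 3 := by omega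
    rw [h1, h2]
    nlinarith
  obtain ⟨c, hc, hcb⟩ := hΘ
  set r : ℕ → ℝ := fun k => ((n₁ k + n₂ k : ℕ) : ℝ) ^ A * p k ^ m with hr
  have hr0 : ∀ k, 0 ≤ r k := fun k =>
    mul_nonneg (pow_nonneg (Nat.cast_nonneg _) _) (pow_nonneg (hp k).1 _)
  -- `r` tends to zero
  have hrt : Tendsto r atTop (nhds 0) := by
    set K := (1 + c) * Real.sqrt c with hK
    have hK0 : 0 ≤ K := mul_nonneg (by linarith) (Real.sqrt_nonneg _)
    have hg : Tendsto (fun k => K ^ A *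
        (p k * Real.sqrt ((n₁ k : ℝ) * n₂ k)
          ^ ((4 * (i : ℝ) - 1) / (4 * i + 1))) ^ m) atTop (nhds 0) := by
      have h1 := hpsmall.pow m
      rw [zero_pow hm0] at h1
      simpa using h1.const_mul (K ^ A)
    apply squeeze_zero' (Filter.Eventually.of_forall hr0) _ hg
    filter_upwards [hn₁.eventually_ge_atTop 1] with k hk1
    have ha1 : (1 : ℝ) ≤ (n₁ k : ℝ) := by exact_mod_cast hk1
    have hab := (hcb k).1
    have hba := (hcb k).2
    have hb1 : (1 : ℝ) ≤ (n₂ k : ℝ) := by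
      have hb0 : (0 : ℝ) < (n₂ k : ℝ) := by nlinarith
      exact_mod_cast Nat.one_le_iff_ne_zero.2 (by exact_mod_cast hb0.ne')
    set a := (n₁ k : ℝ) with hadef
    set b := (n₂ k : ℝ) with hbdef
    set nn := Real.sqrt (a * b) with hnn
    have hab1 : (1 : ℝ) ≤ a * b := by nlinarith
    have hnn1 : (1 : ℝ) ≤ nn := by
      rw [hnn, show (1 : ℝ) = Real.sqrt 1 by simp]
      exact Real.sqrt_le_sqrt hab1
    have hnn0 : (0 : ℝ) < nn := lt_of_lt_of_le one_pos hnn1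
    have hpow : (nn ^ ((4 * (i : ℝ) - 1) / (4 * i + 1))) ^ m = nn ^ B := by
      rw [← Real.rpow_natCast (nn ^ ((4 * (i : ℝ) - 1) / (4 * i + 1))) m,
        ← Real.rpow_mul hnn0.le, ← Real.rpow_natCast nn B]
      congr 1
      have hi4 : (1 : ℕ) ≤ 4 * i := by omega
      rw [hm, hB]
      have hB' : ((2 * l * (4 * i - 1) : ℕ) : ℝ) = 2 * l * (4 * (i : ℝ) - 1) := by
        push_cast [Nat.cast_sub hi4]
        ring
      rw [hB']
      have hne : 4 * (i : ℝ) + 1 ≠ 0 := by positivity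
      push_cast
      field_simp
      ring
    have hnnα : (0 : ℝ) < nn ^ ((4 * (i : ℝ) - 1) / (4 * i + 1)) :=
      Real.rpow_pos_of_pos hnn0 _
    set q := p k * nn ^ ((4 * (i : ℝ) - 1) / (4 * i + 1)) with hqd
    have hq0 : 0 ≤ q := mul_nonneg (hp k).1 hnnα.le
    have hpm : p k ^ m = q ^ m / nn ^ B := by
      rw [hqd, mul_pow, hpow, mul_div_assoc, div_self (by positivity), mul_one]
    have hNab : ((n₁ k + n₂ k : ℕ) : ℝ) = a + b := by push_cast; rfl
    have haK : a ≤ Real.sqrt c * nn := by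
      have h2 : a ^ 2 ≤ c * (a * b) := by nlinarith
      calc a = Real.sqrt (a ^ 2) := (Real.sqrt_sq (by linarith)).symm
        _ ≤ Real.sqrt (c * (a * b)) := Real.sqrt_le_sqrt h2
        _ = Real.sqrt c * nn := by rw [hnn, Real.sqrt_mul hc.le]
    have hNK : a + b ≤ K * nn := by
      calc a + b ≤ a + c * a := by linarith
        _ = (1 + c) * a := by ring
        _ ≤ (1 + c) * (Real.sqrt c * nn) :=
            mul_le_mul_of_nonneg_left haK (by linarith)
        _ = K * nn := by rw [hK]; ring
    calc r k = (a + b) ^ A * (q ^ m / nn ^ B) := by rw [hr]; simp only; rw [hNab, hpm]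
      _ ≤ (K * nn) ^ A * (q ^ m / nn ^ B) := by
          apply mul_le_mul_of_nonneg_right
            (pow_le_pow_left₀ (by positivity) hNK A) (by positivity)
      _ = K ^ A * q ^ m * (nn ^ A / nn ^ B) := by rw [mul_pow]; ring
      _ ≤ K ^ A * q ^ m * 1 := by
          apply mul_le_mul_of_nonneg_left _ (by positivity)
          rw [div_le_one (by positivity)]
          exact pow_le_pow_right₀ hnn1 hAB
      _ = K ^ A * q ^ m := mul_one _
  -- the lintegral bound
  have hLB : ∀ k, ∫⁻ ω, (badPairCount i l ω : ℝ≥0∞)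
      ∂(orientMeasure (n₁ k) (n₂ k) (p k)) ≤ ENNReal.ofReal (r k) := by
    intro k
    refine le_trans
      (lintegral_badPairCount_le (n₁ k) (n₂ k) i l hl2 (p k) (hp k).1 (hp k).2) ?_
    rw [hr]
    simp only
    rw [ENNReal.ofReal_mul (pow_nonneg (Nat.cast_nonneg _) _),
      ENNReal.ofReal_pow (Nat.cast_nonneg _), ENNReal.ofReal_pow (hp k).1,
      ENNReal.ofReal_natCast]
  have hmeas : ∀ k, AEMeasurable (fun ω => (badPairCount i l ω : ℝ≥0∞))
      (orientMeasure (n₁ k) (n₂ k) (p k)) :=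
    fun k => Measurable.of_discrete.aemeasurable
  have hInt : ∀ k, ∫ ω, (badPairCount i l ω : ℝ) ∂(orientMeasure (n₁ k) (n₂ k) (p k))
      = (∫⁻ ω, (badPairCount i l ω : ℝ≥0∞) ∂(orientMeasure (n₁ k) (n₂ k) (p k))).toReal := by
    intro k
    have := integral_toReal (hmeas k)
      (Filter.Eventually.of_forall (fun ω => ENNReal.natCast_lt_top _))
    simpa [ENNReal.toReal_natCast] using this
  constructor
  · apply squeeze_zero (fun k => integral_nonneg (fun ω => Nat.cast_nonneg _)) _ hrt
    intro k
    rw [hInt k]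
    calc (∫⁻ ω, (badPairCount i l ω : ℝ≥0∞)
          ∂(orientMeasure (n₁ k) (n₂ k) (p k))).toReal
        ≤ (ENNReal.ofReal (r k)).toReal :=
          ENNReal.toReal_mono ENNReal.ofReal_ne_top (hLB k)
      _ = r k := ENNReal.toReal_ofReal (hr0 k)
  · have hle : ∀ k, orientMeasure (n₁ k) (n₂ k) (p k) {ω | 1 ≤ badPairCount i l ω}
        ≤ ENNReal.ofReal (r k) := by
      intro k
      refine le_trans ?_ (hLB k)
      have hM := mul_meas_ge_le_lintegral₀ (hmeas k) 1
      rw [one_mul] at hM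
      refine le_trans (le_of_eq ?_) hM
      congr 1
      ext ω
      simp [Set.mem_setOf_eq, Nat.one_le_cast]
    refine tendsto_of_tendsto_of_tendsto_of_le_of_le tendsto_const_nhds ?_
      (fun k => zero_le) hle
    have := (ENNReal.continuous_ofReal.tendsto 0).comp hrt
    simpa [Function.comp_def] using this
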